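/- (Hellman–Raviv upper bound, binary case) Let Z be a random variable taking values in a finite set and Y a random variable taking values in {0,1}, on a common probability space, with η(z) = P(Y = 1 | Z = z) and Bayes error p(e) = E[min(η(Z), 1 − η(Z))]. Then p(e) ≤ (1/2)·H(Y | Z), where H denotes conditional Shannon entropy with base-2 logarithms. -/

import Mathlib

open scoped BigOperators
open Classical

noncomputable section

/-- Probability of an event under a probability mass function `p` on a finite sample space. -/
def pr {Ω : Type*} [Fintype Ω] (p : Ω → ℝ) (E : Ω → Prop) : ℝ :=
  ∑ ω, if E ω then p ω else 0

/-- Posterior probability of the positive class: `η(z) = P(Y = 1 ∣ Z = z)`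
(with `true` encoding class `1`). -/
def post {Ω A : Type*} [Fintype Ω] (p : Ω → ℝ) (Z : Ω → A) (Y : Ω → Bool) (z : A) : ℝ :=
  pr p (fun ω => Z ω = z ∧ Y ω = true) / pr p (fun ω => Z ω = z)

/-- The Bayes classification error `E[min(η(Z), 1 − η(Z))]`. -/
def bayesError {Ω A : Type*} [Fintype Ω] [Fintype A]
    (p : Ω → ℝ) (Z : Ω → A) (Y : Ω → Bool) : ℝ :=
  ∑ z : A, pr p (fun ω => Z ω = z) * min (post p Z Y z) (1 - post p Z Y z)
/-- Shannon entropy in bits (base-2 logarithm) of the distribution of `X` under `p`. -/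
def entropy2 {Ω A : Type*} [Fintype Ω] [Fintype A] (p : Ω → ℝ) (X : Ω → A) : ℝ :=
  ∑ a : A, Real.negMulLog (pr p (fun ω => X ω = a)) / Real.log 2

/-- Conditional Shannon entropy `H(X | Y)` in bits (base-2 logarithms). -/
def condEntropy2 {Ω A B : Type*} [Fintype Ω] [Fintype A] [Fintype B]
    (p : Ω → ℝ) (X : Ω → A) (Y : Ω → B) : ℝ :=
  entropy2 p (fun ω => (X ω, Y ω)) - entropy2 p Y

/-- Key pointwise inequality: `2 log 2 · min(t, 1−t) ≤ binEntropy t` on `[0,1]`. -/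
lemma key_min_le_binEntropy {t : ℝ} (h0 : 0 ≤ t) (h1 : t ≤ 1) :
    min t (1 - t) * (2 * Real.log 2) ≤ Real.binEntropy t := by
  have conc := Real.strictConcave_binEntropy.concaveOn
  have base : ∀ s : ℝ, 0 ≤ s → s ≤ 1/2 → s * (2 * Real.log 2) ≤ Real.binEntropy s := by
    intro s hs0 hs1
    have h := conc.2 (show (0:ℝ) ∈ Set.Icc (0:ℝ) 1 by norm_num)
      (show (2:ℝ)⁻¹ ∈ Set.Icc (0:ℝ) 1 by norm_num)
      (show (0:ℝ) ≤ 1 - 2*s by linarith) (show (0:ℝ) ≤ 2*s by linarith)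
      (show (1 - 2*s) + 2*s = 1 by ring)
    simp only [smul_eq_mul, Real.binEntropy_zero, Real.binEntropy_two_inv, mul_zero,
      zero_add] at h
    have hs : 2*s * (2:ℝ)⁻¹ = s := by ring
    rw [hs] at h
    linarith
  rcases le_total t (1/2) with ht | ht
  · have hmin : min t (1 - t) = t := min_eq_left (by linarith)
    rw [hmin]; exact base t h0 ht
  · have hmin : min t (1 - t) = 1 - t := min_eq_right (by linarith)
    rw [hmin, ← Real.binEntropy_one_sub t]
    exact base (1 - t) (by linarith) (by linarith)

lemma pr_nonneg {Ω : Type*} [Fintype Ω] {p : Ω → ℝ} (hp0 : ∀ ω, 0 ≤ p ω) (E : Ω → Prop) :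
    0 ≤ pr p E := by
  refine Finset.sum_nonneg fun ω _ => ?_
  split
  · exact hp0 ω
  · exact le_rfl

/-- Per-`z` inequality. -/
lemma key_pointwise {a c : ℝ} (ha : 0 ≤ a) (hc : 0 ≤ c) :
    (a + c) * min (a / (a + c)) (1 - a / (a + c)) ≤
      (1/2) * ((Real.negMulLog a + Real.negMulLog c - Real.negMulLog (a + c)) / Real.log 2) := by
  rcases eq_or_lt_of_le (add_nonneg ha hc) with hq | hq
  · have ha0 : a = 0 := by linarith [ha, hc, hq.symm ▸ (le_refl (0:ℝ))]
    have hc0 : c = 0 := by linarith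
    simp [ha0, hc0]
  · set q := a + c with hqdef
    have hq0 : 0 < q := hq
    set t := a / q with htdef
    have ht0 : 0 ≤ t := div_nonneg ha hq0.le
    have ht1 : t ≤ 1 := by
      rw [htdef, div_le_one hq0]; linarith
    have h1t : 1 - t = c / q := by
      rw [htdef, eq_div_iff hq0.ne', sub_mul, one_mul, div_mul_cancel₀ a hq0.ne']; linarith
    have ha' : a = q * t := by rw [htdef, mul_comm, div_mul_cancel₀ a hq0.ne']
    have hc' : c = q * (1 - t) := by rw [h1t]; field_simp
    have hdiff : Real.negMulLog a + Real.negMulLog c - Real.negMulLog q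
        = q * Real.binEntropy t := by
      rw [ha', hc', Real.negMulLog_mul, Real.negMulLog_mul,
        Real.binEntropy_eq_negMulLog_add_negMulLog_one_sub]
      ring
    rw [hdiff]
    have hkey := key_min_le_binEntropy ht0 ht1
    have hlog2 : (0:ℝ) < Real.log 2 := Real.log_pos (by norm_num)
    have h2 := mul_le_mul_of_nonneg_left hkey hq0.le
    rw [show (1:ℝ)/2 * (q * Real.binEntropy t / Real.log 2)
        = (q * Real.binEntropy t) / (2 * Real.log 2) by ring,
      le_div_iff₀ (by positivity), mul_assoc]
    exact h2

/-- **Hellman–Raviv upper bound, binary case.** With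
`p(e) = E[min(η(Z), 1 − η(Z))]` the Bayes error and entropies in bits,
`p(e) ≤ (1/2)·H(Y | Z)`. -/
theorem hellman_raviv_upper_bound_binary
    {Ω A : Type*} [Fintype Ω] [Fintype A]
    (p : Ω → ℝ) (hp0 : ∀ ω, 0 ≤ p ω) (hp1 : ∑ ω, p ω = 1)
    (Z : Ω → A) (Y : Ω → Bool) :
    bayesError p Z Y ≤ (1 / 2) * condEntropy2 p Y Z := by
  -- rewrite conditional entropy as a sum over z
  have hjoint : entropy2 p (fun ω => (Y ω, Z ω))
      = ∑ z : A, ((Real.negMulLog (pr p (fun ω => Z ω = z ∧ Y ω = true))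
          + Real.negMulLog (pr p (fun ω => Z ω = z ∧ Y ω = false))) / Real.log 2) := by
    rw [entropy2, Fintype.sum_prod_type, Fintype.sum_bool]
    rw [← Finset.sum_add_distrib]
    refine Finset.sum_congr rfl fun z _ => ?_
    have e1 : (fun ω => (Y ω, Z ω) = (true, z)) = (fun ω => Z ω = z ∧ Y ω = true) := by
      funext ω; simp [Prod.ext_iff, and_comm]
    have e2 : (fun ω => (Y ω, Z ω) = (false, z)) = (fun ω => Z ω = z ∧ Y ω = false) := by
      funext ω; simp [Prod.ext_iff, and_comm]
    rw [e1, e2, ← add_div]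
  have hcond : condEntropy2 p Y Z
      = ∑ z : A, ((Real.negMulLog (pr p (fun ω => Z ω = z ∧ Y ω = true))
          + Real.negMulLog (pr p (fun ω => Z ω = z ∧ Y ω = false))
          - Real.negMulLog (pr p (fun ω => Z ω = z))) / Real.log 2) := by
    rw [condEntropy2, hjoint, entropy2, ← Finset.sum_sub_distrib]
    refine Finset.sum_congr rfl fun z _ => ?_
    rw [div_sub_div_same]
  rw [hcond, bayesError, Finset.mul_sum]
  refine Finset.sum_le_sum fun z _ => ?_
  set a := pr p (fun ω => Z ω = z ∧ Y ω = true) with hadef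
  set c := pr p (fun ω => Z ω = z ∧ Y ω = false) with hcdef
  have ha : 0 ≤ a := pr_nonneg hp0 _
  have hc : 0 ≤ c := pr_nonneg hp0 _
  have hsplit : pr p (fun ω => Z ω = z) = a + c := by
    rw [hadef, hcdef, pr, pr, pr, ← Finset.sum_add_distrib]
    refine Finset.sum_congr rfl fun ω _ => ?_
    by_cases hz : Z ω = z
    · cases hY : Y ω <;> simp [hz, hY]
    · simp [hz]
  rw [hsplit, post, hsplit]
  exact key_pointwise ha hc
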